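/- Let f : Δₙ → ℝ (Δₙ the ordered simplex in [0,1]ⁿ) be a symmetric integrable function, i.e. f extends to a permutation-invariant function on [0,1]ⁿ. Then for 1 ≤ i ≤ n and t ∈ [0,1], ∫_{Δₙ ∩ {tᵢ ≤ t}} f = (1/n!) ∫_{A} f, where A = {s ∈ [0,1]ⁿ : #{j : sⱼ ≤ t} ≥ i}. -/

import Mathlib

open Set Real MeasureTheory

def orderedSimplex (n : ℕ) : Set (Fin n → ℝ) :=
  {t | (∀ j, t j ∈ Set.Icc (0:ℝ) 1) ∧ StrictMono t}

/-- The set of non-injective tuples is a null set. -/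
lemma aux_noninj_null (n : ℕ) :
    volume {s : Fin n → ℝ | ¬ Function.Injective s} = 0 := by
  have h1 : {s : Fin n → ℝ | ¬ Function.Injective s} ⊆
      ⋃ (p : Fin n × Fin n) (_ : p.1 ≠ p.2), {s : Fin n → ℝ | s p.1 = s p.2} := by
    intro s hs
    simp only [Function.Injective, not_forall] at hs
    obtain ⟨a, b, hab, hne⟩ := hs
    exact mem_iUnion₂.2 ⟨(a,b), hne, hab⟩
  refine measure_mono_null h1 (measure_iUnion_null fun p => measure_iUnion_null fun hp => ?_)
  obtain ⟨j, k⟩ := p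
  simp only at hp
  set L : (Fin n → ℝ) →ₗ[ℝ] ℝ :=
    LinearMap.proj (R := ℝ) (φ := fun _ : Fin n => ℝ) j - LinearMap.proj k with hL
  have hker : {s : Fin n → ℝ | s j = s k} = (LinearMap.ker L : Set (Fin n → ℝ)) := by
    ext s; simp [hL, sub_eq_zero]
  rw [hker]
  apply Measure.addHaar_submodule
  intro h
  have h2 : L (Pi.single j 1) = 0 := by
    have : Pi.single j (1:ℝ) ∈ LinearMap.ker L := by rw [h]; trivial
    exact this
  simp [hL, Pi.single_apply, hp, (Ne.symm hp)] at h2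

/-- Composition with a permutation is measure preserving. -/
lemma aux_mp (n : ℕ) (σ : Equiv.Perm (Fin n)) :
    MeasurePreserving (fun s : Fin n → ℝ => s ∘ σ) volume volume := by
  have h := volume_measurePreserving_piCongrLeft (fun _ : Fin n => ℝ) σ.symm
  convert h using 1
  ext s j
  have := MeasurableEquiv.piCongrLeft_apply_apply (e := σ.symm) (β := fun _ : Fin n => ℝ) s (σ j)
  simp only [Equiv.symm_apply_apply] at this
  simpa using this.symm

/-- For a strictly monotone tuple, the count of coordinates `≤ t` is at least `i`
iff the `(i-1)`-st coordinate is `≤ t`. -/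
lemma aux_count (n i : ℕ) (hi : 1 ≤ i) (hin : i ≤ n) (t : ℝ) (u : Fin n → ℝ)
    (hu : StrictMono u) :
    i ≤ (Finset.univ.filter (fun j : Fin n => u j ≤ t)).card ↔ u ⟨i - 1, Nat.lt_of_lt_of_le (Nat.sub_lt hi Nat.one_pos) hin⟩ ≤ t := by
  constructor
  · intro h
    by_contra hlt
    push_neg at hlt
    have hsub : Finset.univ.filter (fun j : Fin n => u j ≤ t) ⊆ Finset.Iio ⟨i-1, by omega⟩ := by
      intro j hj
      rw [Finset.mem_filter] at hj
      rw [Finset.mem_Iio]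
      by_contra hge
      push_neg at hge
      exact absurd (le_trans (hu.monotone hge) hj.2) (not_le.2 hlt)
    have h2 := Finset.card_le_card hsub
    rw [Fin.card_Iio] at h2
    simp only [Fin.val_mk] at h2
    omega
  · intro h
    have hsub : Finset.Iic (⟨i-1, by omega⟩ : Fin n) ⊆
        Finset.univ.filter (fun j : Fin n => u j ≤ t) := by
      intro j hj
      rw [Finset.mem_Iic] at hj
      exact Finset.mem_filter.2 ⟨Finset.mem_univ _, le_trans (hu.monotone hj) h⟩
    have h2 := Finset.card_le_card hsub
    rw [Fin.card_Iic] at h2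
    simp only [Fin.val_mk] at h2
    omega

/-- The count of coordinates `≤ t` is invariant under permutation. -/
lemma aux_count_perm (n : ℕ) (s : Fin n → ℝ) (σ : Equiv.Perm (Fin n)) (t : ℝ) :
    (Finset.univ.filter (fun j : Fin n => s (σ j) ≤ t)).card =
    (Finset.univ.filter (fun j : Fin n => s j ≤ t)).card := by
  apply Finset.card_bij (fun j _ => σ j)
  · intro a ha; rw [Finset.mem_filter] at *; exact ⟨Finset.mem_univ _, ha.2⟩
  · intro a _ b _ hab; exact σ.injective hab
  · intro b hb
    refine ⟨σ.symm b, ?_, by simp⟩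
    rw [Finset.mem_filter] at *
    simpa using hb.2

/-- Uniqueness of the sorting permutation for injective tuples. -/
lemma aux_sort_unique (n : ℕ) (s : Fin n → ℝ) (hs : Function.Injective s)
    (σ τ : Equiv.Perm (Fin n))
    (h1 : StrictMono (s ∘ σ)) (h2 : StrictMono (s ∘ τ)) : σ = τ := by
  haveI : WellFoundedLT (Fin n) := inferInstance
  have hr : range (s ∘ σ) = range (s ∘ τ) := by
    rw [Set.range_comp, Set.range_comp, Equiv.range_eq_univ, Equiv.range_eq_univ]
  have h3 := Set.range_injOn_strictMono (β := Fin n) (γ := ℝ) h1 h2 hr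
  exact Equiv.ext fun j => hs (congrFun h3 j)

theorem stmt_6 (n : ℕ) (hn : 1 ≤ n) (f : (Fin n → ℝ) → ℝ)
    (hint : IntegrableOn f (Set.univ.pi fun _ : Fin n => Icc (0:ℝ) 1))
    (hsym : ∀ σ : Equiv.Perm (Fin n), ∀ s : Fin n → ℝ, f (s ∘ σ) = f s)
    (i : ℕ) (hi : 1 ≤ i) (hin : i ≤ n) (t : ℝ) (ht : t ∈ Icc (0:ℝ) 1) :
    ∫ s in orderedSimplex n ∩ {s | s ⟨i - 1, by omega⟩ ≤ t}, f s =
      (1 / (Nat.factorial n : ℝ)) *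
        ∫ s in (Set.univ.pi fun _ : Fin n => Icc (0:ℝ) 1) ∩
            {s | i ≤ (Finset.univ.filter (fun j : Fin n => s j ≤ t)).card}, f s := by
  classical
  set cube : Set (Fin n → ℝ) := Set.univ.pi fun _ : Fin n => Icc (0:ℝ) 1 with hcube
  set B : Set (Fin n → ℝ) :=
    orderedSimplex n ∩ {s | s ⟨i - 1, by omega⟩ ≤ t} with hB
  set A : Set (Fin n → ℝ) :=
    cube ∩ {s | i ≤ (Finset.univ.filter (fun j : Fin n => s j ≤ t)).card} with hA
  set N : Set (Fin n → ℝ) := {s | ¬ Function.Injective s} with hN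
  have hNnull : volume N = 0 := aux_noninj_null n
  -- measurability of B
  have hmono : MeasurableSet {s : Fin n → ℝ | StrictMono s} := by
    have : {s : Fin n → ℝ | StrictMono s} =
        ⋂ (j : Fin n) (k : Fin n) (_ : j < k), {s : Fin n → ℝ | s j < s k} := by
      ext s
      simp only [Set.mem_iInter, Set.mem_setOf_eq]
      exact ⟨fun h j k hjk => h hjk, fun h a b hab => h a b hab⟩
    rw [this]
    exact MeasurableSet.iInter fun j => MeasurableSet.iInter fun k =>
      MeasurableSet.iInter fun _ =>
        measurableSet_lt (measurable_pi_apply j) (measurable_pi_apply k)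
  have hcubeM : MeasurableSet cube :=
    MeasurableSet.univ_pi fun _ => measurableSet_Icc
  have hBM : MeasurableSet B := by
    apply MeasurableSet.inter
    · have : orderedSimplex n =
          {s : Fin n → ℝ | ∀ j, s j ∈ Set.Icc (0:ℝ) 1} ∩ {s | StrictMono s} := rfl
      rw [this]
      refine MeasurableSet.inter ?_ hmono
      have : {s : Fin n → ℝ | ∀ j, s j ∈ Set.Icc (0:ℝ) 1} = cube := by
        ext s; simp [hcube, Set.mem_pi, Pi.le_def, forall_and]
      rw [this]; exact hcubeM
    · exact measurableSet_le (measurable_pi_apply _) measurable_const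
  have hNM : MeasurableSet N := by
    have : N = ⋃ (p : Fin n × Fin n) (_ : p.1 ≠ p.2), {s : Fin n → ℝ | s p.1 = s p.2} := by
      ext s
      simp only [hN, Set.mem_setOf_eq, Set.mem_iUnion, Function.Injective, not_forall]
      constructor
      · rintro ⟨a, b, hab, hne⟩; exact ⟨(a,b), hne, hab⟩
      · rintro ⟨⟨a,b⟩, hne, hab⟩; exact ⟨a, b, hab, hne⟩
    rw [this]
    exact MeasurableSet.iUnion fun p => MeasurableSet.iUnion fun _ =>
      measurableSet_eq_fun (measurable_pi_apply _) (measurable_pi_apply _)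
  have hAM : MeasurableSet A := by
    refine hcubeM.inter ?_
    have : {s : Fin n → ℝ | i ≤ (Finset.univ.filter (fun j : Fin n => s j ≤ t)).card} =
        ⋃ (T : Finset (Fin n)) (_ : T.card = i), ⋂ j ∈ T, {s : Fin n → ℝ | s j ≤ t} := by
      ext s
      simp only [Set.mem_setOf_eq, Set.mem_iUnion, Set.mem_iInter]
      constructor
      · intro h
        obtain ⟨T, hTsub, hTcard⟩ := Finset.exists_subset_card_eq h
        exact ⟨T, hTcard, fun j hj => (Finset.mem_filter.1 (hTsub hj)).2⟩
      · rintro ⟨T, hTcard, h⟩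
        have : T ⊆ Finset.univ.filter (fun j : Fin n => s j ≤ t) := fun j hj =>
          Finset.mem_filter.2 ⟨Finset.mem_univ _, h j hj⟩
        calc i = T.card := hTcard.symm
          _ ≤ _ := Finset.card_le_card this
    rw [this]
    exact MeasurableSet.iUnion fun T => MeasurableSet.iUnion fun _ =>
      MeasurableSet.biInter T.countable_toSet fun j _ =>
        measurableSet_le (measurable_pi_apply _) measurable_const
  -- the pieces
  set C : Equiv.Perm (Fin n) → Set (Fin n → ℝ) :=
    fun σ => ((fun s : Fin n → ℝ => s ∘ σ) ⁻¹' B) \ N with hC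
  have hCM : ∀ σ, MeasurableSet (C σ) := fun σ =>
    ((aux_mp n σ).measurable hBM).diff hNM
  -- each piece integral equals the integral over B
  have hpiece : ∀ σ : Equiv.Perm (Fin n),
      ∫ s in C σ, f s = ∫ s in B, f s := by
    intro σ
    have hae : C σ =ᵐ[volume] ((fun s : Fin n → ℝ => s ∘ σ) ⁻¹' B) :=
      diff_null_ae_eq_self hNnull
    rw [setIntegral_congr_set hae]
    have hemb : MeasurableEmbedding (fun s : Fin n → ℝ => s ∘ σ) := by
      have : (fun s : Fin n → ℝ => s ∘ σ) =
          (MeasurableEquiv.piCongrLeft (fun _ : Fin n => ℝ) σ.symm) := by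
        ext s j
        have := MeasurableEquiv.piCongrLeft_apply_apply (e := σ.symm)
          (β := fun _ : Fin n => ℝ) s (σ j)
        simp only [Equiv.symm_apply_apply] at this
        simpa using this.symm
      rw [this]
      exact (MeasurableEquiv.piCongrLeft (fun _ : Fin n => ℝ) σ.symm).measurableEmbedding
    have key := (aux_mp n σ).setIntegral_preimage_emb hemb
      (fun u => f (u ∘ ⇑σ.symm)) B
    have h1 : ∀ s : Fin n → ℝ, (s ∘ ⇑σ) ∘ ⇑σ.symm = s := by
      intro s; ext j; simp
    have h2 : (∫ x in (fun s : Fin n → ℝ => s ∘ σ) ⁻¹' B, f ((x ∘ ⇑σ) ∘ ⇑σ.symm)) =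
        ∫ x in (fun s : Fin n → ℝ => s ∘ σ) ⁻¹' B, f x := by
      apply setIntegral_congr_fun (((aux_mp n σ).measurable hBM))
      intro x _
      show f ((x ∘ ⇑σ) ∘ ⇑σ.symm) = f x
      rw [h1 x]
    rw [← h2, key]
    apply setIntegral_congr_fun hBM
    intro u _
    exact hsym σ.symm u
  -- disjointness
  have hdisj : Pairwise (Function.onFun Disjoint C) := by
    intro σ τ hne
    rw [Function.onFun, Set.disjoint_left]
    rintro s ⟨hsσ, hsN⟩ ⟨hsτ, _⟩
    have hinj : Function.Injective s := not_not.1 hsN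
    have h1 : StrictMono (s ∘ σ) := hsσ.1.2
    have h2 : StrictMono (s ∘ τ) := hsτ.1.2
    exact hne (aux_sort_unique n s hinj σ τ h1 h2)
  -- the union equals A minus the null set
  have hunion : (⋃ σ : Equiv.Perm (Fin n), C σ) = A \ N := by
    ext s
    simp only [Set.mem_iUnion, Set.mem_diff]
    constructor
    · rintro ⟨σ, hσB, hsN⟩
      have hu : StrictMono (s ∘ σ) := hσB.1.2
      have hcoord : ∀ j, s j ∈ Set.Icc (0:ℝ) 1 := by
        intro j
        have := hσB.1.1 (σ.symm j)
        simpa using this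
      have hcount : i ≤ (Finset.univ.filter (fun j : Fin n => s j ≤ t)).card := by
        rw [← aux_count_perm n s σ t]
        exact (aux_count n i hi hin t (s ∘ σ) hu).2 hσB.2
      exact ⟨⟨fun j _ => hcoord j, hcount⟩, hsN⟩
    · rintro ⟨⟨hscube, hcount⟩, hsN⟩
      have hinj : Function.Injective s := not_not.1 hsN
      set σ := Tuple.sort s with hσ
      have hu : StrictMono (s ∘ σ) :=
        (Tuple.monotone_sort s).strictMono_of_injective (hinj.comp σ.injective)
      refine ⟨σ, ⟨⟨fun j => hscube (σ j) trivial, hu⟩, ?_⟩, hsN⟩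
      apply (aux_count n i hi hin t (s ∘ σ) hu).1
      simp only [Function.comp_apply]
      rw [aux_count_perm n s σ t]
      exact hcount
  -- conclude
  have hAN : A \ N =ᵐ[volume] A := diff_null_ae_eq_self hNnull
  have hintA : IntegrableOn f A := hint.mono_set Set.inter_subset_left
  have hintU : IntegrableOn f (⋃ σ : Equiv.Perm (Fin n), C σ) := by
    rw [hunion]
    exact hintA.mono_set Set.diff_subset
  have hsum := integral_iUnion hCM hdisj hintU
  rw [hunion, tsum_fintype] at hsum
  replace hsum := (setIntegral_congr_set (f := f) hAN).symm.trans hsum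
  have hsum2 : ∫ s in A, f s = (Nat.factorial n : ℝ) * ∫ s in B, f s := by
    rw [hsum]
    simp only [hpiece]
    rw [Finset.sum_const, Finset.card_univ, Fintype.card_perm, Fintype.card_fin,
      nsmul_eq_mul]
  have hfact : (Nat.factorial n : ℝ) ≠ 0 := Nat.cast_ne_zero.2 (Nat.factorial_ne_zero n)
  rw [hsum2]
  field_simp
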